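/- In Ti*(p,γ), for any n and any normalized block vectors x₁*, …, xₙ* of (eⱼ*), ‖∑ⱼ₌₁ⁿ xⱼ*‖ ≤ n^{1/q}/γ. -/

import Mathlib

open Finset

noncomputable section

/-- Coordinate restriction `E a` of a finitely supported sequence `a` to the finite set `E`. -/
def restr (E : Finset ℕ) (a : ℕ →₀ ℝ) : ℕ →₀ ℝ := a.filter (· ∈ E)

/-- `E₁ < E₂ < ⋯ < Eₙ`: a family of nonempty finite sets of naturals which are consecutive. -/
def Consec {n : ℕ} (E : Fin n → Finset ℕ) : Prop :=
  (∀ j, (E j).Nonempty) ∧ ∀ i j : Fin n, i < j → ∀ s ∈ E i, ∀ t ∈ E j, s < t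

/-- The set of quantities `γ·(∑ⱼ N(Eⱼ a))/n^{1/q}` over all consecutive families `E₁ < ⋯ < Eₙ`. -/
def tiSet (q γ : ℝ) (N : (ℕ →₀ ℝ) → ℝ) (a : ℕ →₀ ℝ) : Set ℝ :=
  {x | ∃ n : ℕ, 0 < n ∧ ∃ E : Fin n → Finset ℕ, Consec E ∧
    x = γ * (∑ j, N (restr (E j) a)) / (n : ℝ) ^ (1 / q)}

/-- `N` satisfies the implicit equation defining the norm of the Tirilman space `Ti(p,γ)`:
`‖a‖ = max {‖a‖_∞, γ·sup (∑ⱼ ‖Eⱼ a‖)/n^{1/q}}`. -/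
def TiEq (q γ : ℝ) (N : (ℕ →₀ ℝ) → ℝ) : Prop :=
  ∀ a : ℕ →₀ ℝ, N a = max (⨆ i, |a i|) (sSup (tiSet q γ N a))

/-- Finitely many finitely supported vectors have consecutive supports. -/
def ConsecSupp {n : ℕ} (x : Fin n → (ℕ →₀ ℝ)) : Prop :=
  ∀ i j : Fin n, i < j → ∀ s ∈ (x i).support, ∀ t ∈ (x j).support, s < t

/-- A sequence of finitely supported vectors with consecutive supports. -/
def ConsecSuppSeq (x : ℕ → (ℕ →₀ ℝ)) : Prop :=
  ∀ i j : ℕ, i < j → ∀ s ∈ (x i).support, ∀ t ∈ (x j).support, s < t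

/-- The dual norm on `Ti^*(p,γ)` of the functional with coefficient vector `c`:
the supremum of `∑ᵢ cᵢ aᵢ` over the unit ball of the Tirilman norm `N`. -/
def dualN (N : (ℕ →₀ ℝ) → ℝ) (c : ℕ →₀ ℝ) : ℝ :=
  sSup {x | ∃ a : ℕ →₀ ℝ, N a ≤ 1 ∧ x = ∑ i ∈ c.support, c i * a i}

-- basic restr lemmas
lemma restr_apply (E : Finset ℕ) (a : ℕ →₀ ℝ) (i : ℕ) :
    restr E a i = if i ∈ E then a i else 0 := by
  unfold restr; rw [Finsupp.filter_apply]

lemma restr_support (E : Finset ℕ) (a : ℕ →₀ ℝ) :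
    (restr E a).support = a.support.filter (· ∈ E) := by
  unfold restr; rw [Finsupp.support_filter]

lemma restr_smul (E : Finset ℕ) (a : ℕ →₀ ℝ) (c : ℝ) :
    restr E (c • a) = c • restr E a := by
  ext i
  rw [Finsupp.smul_apply, restr_apply, restr_apply, Finsupp.smul_apply]
  split <;> simp

lemma restr_eq_self (E : Finset ℕ) (a : ℕ →₀ ℝ) (h : a.support ⊆ E) : restr E a = a := by
  ext i
  rw [restr_apply]
  split
  · rfl
  · rename_i hi
    by_contra hne
    exact hi (h (Finsupp.mem_support_iff.mpr fun h0 => hne h0.symm))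

lemma restr_eq_zero (E : Finset ℕ) (a : ℕ →₀ ℝ) (h : ∀ i ∈ a.support, i ∉ E) :
    restr E a = 0 := by
  ext i
  rw [restr_apply]
  split
  · rename_i hi
    by_contra hne
    exact h i (Finsupp.mem_support_iff.mpr fun h0 => hne (by rw [h0]; rfl)) hi
  · rfl

lemma restr_zero (E : Finset ℕ) : restr E (0 : ℕ →₀ ℝ) = 0 := by
  ext i; rw [restr_apply]; split <;> rfl

lemma consec_disjoint {n : ℕ} {E : Fin n → Finset ℕ} (hE : Consec E) {i j : Fin n}
    (hij : i ≠ j) {s : ℕ} (hi : s ∈ E i) (hj : s ∈ E j) : False := by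
  rcases lt_trichotomy i j with h | h | h
  · exact lt_irrefl s (hE.2 i j h s hi s hj)
  · exact hij h
  · exact lt_irrefl s (hE.2 j i h s hj s hi)

-- l1
def l1Aux (b : ℕ →₀ ℝ) : ℝ := ∑ i ∈ b.support, |b i|

lemma l1Aux_nonneg (b : ℕ →₀ ℝ) : 0 ≤ l1Aux b :=
  Finset.sum_nonneg fun _ _ => abs_nonneg _

lemma abs_le_l1Aux (b : ℕ →₀ ℝ) (i : ℕ) : |b i| ≤ l1Aux b := by
  by_cases h : i ∈ b.support
  · exact Finset.single_le_sum (f := fun i => |b i|) (fun _ _ => abs_nonneg _) h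
  · rw [Finsupp.notMem_support_iff.mp h, abs_zero]; exact l1Aux_nonneg b

lemma bdd_abs (b : ℕ →₀ ℝ) : BddAbove (Set.range fun i => |b i|) :=
  ⟨l1Aux b, by rintro _ ⟨i, rfl⟩; exact abs_le_l1Aux b i⟩

lemma sup_le_l1Aux (b : ℕ →₀ ℝ) : (⨆ i, |b i|) ≤ l1Aux b :=
  ciSup_le fun i => abs_le_l1Aux b i

lemma abs_le_sup (b : ℕ →₀ ℝ) (i : ℕ) : |b i| ≤ ⨆ i, |b i| :=
  le_ciSup (bdd_abs b) i

lemma sup_nonneg' (b : ℕ →₀ ℝ) : 0 ≤ ⨆ i, |b i| :=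
  Real.iSup_nonneg fun i => abs_nonneg _

section withN
variable {q γ : ℝ} {N : (ℕ →₀ ℝ) → ℝ}

lemma N_nonneg (hN : TiEq q γ N) (b : ℕ →₀ ℝ) : 0 ≤ N b := by
  rw [hN b]; exact le_trans (sup_nonneg' b) (le_max_left _ _)

lemma sup_le_N (hN : TiEq q γ N) (b : ℕ →₀ ℝ) : (⨆ i, |b i|) ≤ N b := by
  rw [hN b]; exact le_max_left _ _

lemma sSup_tiSet_le_N (hN : TiEq q γ N) (b : ℕ →₀ ℝ) : sSup (tiSet q γ N b) ≤ N b := by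
  rw [hN b]; exact le_max_right _ _

lemma eq_zero_of_N_eq_zero (hN : TiEq q γ N) (b : ℕ →₀ ℝ) (h : N b = 0) : b = 0 := by
  ext i
  have h1 := le_trans (abs_le_sup b i) (sup_le_N hN b)
  rw [h] at h1
  have := abs_nonneg (b i)
  have h2 : |b i| = 0 := le_antisymm h1 this
  rw [Finsupp.coe_zero, Pi.zero_apply]
  exact abs_eq_zero.mp h2

end withN
section withPQ
variable {p q γ : ℝ} {N : (ℕ →₀ ℝ) → ℝ}

lemma facts_q (hp : 1 < p) (hpq : 1 / p + 1 / q = 1) : 0 < 1 / p ∧ 0 < 1 / q := by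
  have hp0 : 0 < p := lt_trans one_pos hp
  have h1 : 0 < 1 / p := by positivity
  have h2 : 1 / p < 1 := by rw [div_lt_one hp0]; exact hp
  exact ⟨h1, by linarith⟩

lemma gamma_lt_one (hp : 1 < p) (hpq : 1 / p + 1 / q = 1) (hγ3 : γ < (3 : ℝ) ^ (-(1 / q))) :
    γ < 1 := by
  have hq := (facts_q hp hpq).2
  have : (3 : ℝ) ^ (-(1 / q)) < 1 :=
    Real.rpow_lt_one_of_one_lt_of_neg (by norm_num) (by linarith)
  linarith

lemma one_le_rpow_nat (hq : 0 < 1 / q) {m : ℕ} (hm : 0 < m) : 1 ≤ (m : ℝ) ^ (1 / q) := by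
  have h1 : (1 : ℝ) ≤ (m : ℝ) := by exact_mod_cast hm
  calc (1 : ℝ) = (1 : ℝ) ^ (1 / q) := (Real.one_rpow _).symm
    _ ≤ (m : ℝ) ^ (1 / q) := Real.rpow_le_rpow zero_le_one h1 (le_of_lt hq)

lemma N_zero (hp : 1 < p) (hpq : 1 / p + 1 / q = 1) (hγ0 : 0 < γ) (hN : TiEq q γ N) :
    N 0 = 0 := by
  have hq := (facts_q hp hpq).2
  have hp' := (facts_q hp hpq).1
  set t := N (0 : ℕ →₀ ℝ) with htdef
  have ht0 : 0 ≤ t := N_nonneg hN 0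
  have hsup0 : (⨆ i, |(0 : ℕ →₀ ℝ) i|) = 0 := by simp
  rcases eq_or_lt_of_le ht0 with h | h
  · exact h.symm
  -- t > 0: show tiSet is unbounded
  exfalso
  have hmem : ∀ m : ℕ, 0 < m → γ * ((m : ℝ) * t) / (m : ℝ) ^ (1 / q) ∈ tiSet q γ N 0 := by
    intro m hm
    refine ⟨m, hm, fun j => {(j : ℕ)}, ⟨fun j => Finset.singleton_nonempty _, ?_⟩, ?_⟩
    · intro i j hij s hs t' ht'
      rw [Finset.mem_singleton] at hs ht'
      subst hs; subst ht'
      exact hij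
    · congr 1
      congr 1
      rw [Finset.sum_congr rfl (fun j _ => by rw [restr_zero])]
      rw [Finset.sum_const, Finset.card_univ, Fintype.card_fin, nsmul_eq_mul]
  have hunbdd : ¬ BddAbove (tiSet q γ N 0) := by
    rintro ⟨M, hM⟩
    set K : ℝ := max (M / (γ * t)) 0 with hKdef
    have hK0 : 0 ≤ K := le_max_right _ _
    obtain ⟨m, hm⟩ := exists_nat_gt (K ^ p)
    have hKp0 : 0 ≤ K ^ p := Real.rpow_nonneg hK0 _
    have hm0 : 0 < m := by
      by_contra hm0
      push_neg at hm0
      interval_cases m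
      simp at hm
      linarith
    have hmpos : (0 : ℝ) < m := by exact_mod_cast hm0
    have hle : γ * ((m : ℝ) * t) / (m : ℝ) ^ (1 / q) ≤ M := hM (hmem m hm0)
    -- rewrite lhs as γ * t * m^(1/p)
    have hsplit : (m : ℝ) = (m : ℝ) ^ (1 / p) * (m : ℝ) ^ (1 / q) := by
      rw [← Real.rpow_add hmpos, hpq, Real.rpow_one]
    have hrq : (0 : ℝ) < (m : ℝ) ^ (1 / q) := Real.rpow_pos_of_pos hmpos _
    have heq : γ * ((m : ℝ) * t) / (m : ℝ) ^ (1 / q) = γ * t * (m : ℝ) ^ (1 / p) := by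
      rw [div_eq_iff (ne_of_gt hrq)]
      nth_rewrite 1 [hsplit]
      ring
    rw [heq] at hle
    -- but m^(1/p) > K
    have hKlt : K < (m : ℝ) ^ (1 / p) := by
      have h1 : (K ^ p) ^ (1 / p) < (m : ℝ) ^ (1 / p) :=
        Real.rpow_lt_rpow hKp0 hm hp'
      rwa [← Real.rpow_mul hK0, mul_one_div_cancel (by positivity : p ≠ 0),
        Real.rpow_one] at h1
    have hγt : 0 < γ * t := mul_pos hγ0 h
    have h2 : M / (γ * t) ≤ K := le_max_left _ _
    have h3 : M ≤ γ * t * K := by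
      rw [div_le_iff₀ hγt] at h2
      linarith [h2]
    nlinarith [hKlt, hγt]
  have h2 := hN (0 : ℕ →₀ ℝ)
  rw [Real.sSup_of_not_bddAbove hunbdd, hsup0] at h2
  simp only [max_self] at h2
  rw [← htdef] at h2
  linarith

end withPQ
section withPQ2
variable {p q γ : ℝ} {N : (ℕ →₀ ℝ) → ℝ}

lemma l1Aux_restr (E : Finset ℕ) (a : ℕ →₀ ℝ) :
    l1Aux (restr E a) = ∑ i ∈ a.support.filter (· ∈ E), |a i| := by
  unfold l1Aux
  rw [restr_support]
  refine Finset.sum_congr rfl fun i hi => ?_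
  rw [Finset.mem_filter] at hi
  rw [restr_apply, if_pos hi.2]

lemma sum_l1Aux_restr_le {n : ℕ} {E : Fin n → Finset ℕ} (hE : Consec E) (a : ℕ →₀ ℝ) :
    ∑ j, l1Aux (restr (E j) a) ≤ l1Aux a := by
  have hdisj : (↑(Finset.univ : Finset (Fin n)) : Set (Fin n)).PairwiseDisjoint
      (fun j => a.support.filter (· ∈ E j)) := by
    intro i _ j _ hij
    simp only [Function.onFun]
    rw [Finset.disjoint_left]
    intro s hsi hsj
    rw [Finset.mem_filter] at hsi hsj
    exact consec_disjoint hE hij hsi.2 hsj.2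
  calc ∑ j, l1Aux (restr (E j) a)
      = ∑ j ∈ Finset.univ, ∑ i ∈ a.support.filter (· ∈ E j), |a i| :=
        Finset.sum_congr rfl fun j _ => l1Aux_restr _ _
    _ = ∑ i ∈ Finset.univ.biUnion (fun j => a.support.filter (· ∈ E j)), |a i| :=
        (Finset.sum_biUnion hdisj).symm
    _ ≤ ∑ i ∈ a.support, |a i| := by
        apply Finset.sum_le_sum_of_subset_of_nonneg
        · intro i hi
          rw [Finset.mem_biUnion] at hi
          obtain ⟨j, _, hj⟩ := hi
          exact (Finset.mem_filter.mp hj).1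
        · intro i _ _; exact abs_nonneg _
    _ = l1Aux a := rfl

lemma card_restr_lt {E : Finset ℕ} {b : ℕ →₀ ℝ} (h : ¬ b.support ⊆ E) :
    (restr E b).support.card < b.support.card := by
  rw [restr_support]
  apply Finset.card_lt_card
  rw [Finset.ssubset_iff_of_subset (Finset.filter_subset _ _)]
  rw [Finset.not_subset] at h
  obtain ⟨i, hi, hiE⟩ := h
  exact ⟨i, hi, fun hc => hiE (Finset.mem_filter.mp hc).2⟩

-- collapse of a covered sum
lemma tiSum_collapse (hN : TiEq q γ N) (hp : 1 < p) (hpq : 1 / p + 1 / q = 1) (hγ0 : 0 < γ)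
    {m : ℕ} {E : Fin m → Finset ℕ} (hE : Consec E) {b : ℕ →₀ ℝ} {j₀ : Fin m}
    (hcov : b.support ⊆ E j₀) :
    ∑ j, N (restr (E j) b) = N b := by
  rw [Fintype.sum_eq_single j₀]
  · rw [restr_eq_self _ _ hcov]
  · intro j hj
    rw [restr_eq_zero, N_zero hp hpq hγ0 hN]
    intro i hi hiE
    exact consec_disjoint hE hj hiE (hcov hi)

lemma N_le_l1Aux (hN : TiEq q γ N) (hp : 1 < p) (hpq : 1 / p + 1 / q = 1)
    (hγ0 : 0 < γ) (hγ3 : γ < (3 : ℝ) ^ (-(1 / q))) : ∀ b, N b ≤ l1Aux b := by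
  have hq := (facts_q hp hpq).2
  have hγ1 := gamma_lt_one hp hpq hγ3
  suffices H : ∀ k, ∀ b : ℕ →₀ ℝ, b.support.card < k → N b ≤ l1Aux b from
    fun b => H (b.support.card + 1) b (Nat.lt_succ_self _)
  intro k
  induction k with
  | zero => intro b hb; omega
  | succ k ih =>
    intro b hb
    by_cases hsupp : b.support = ∅
    · rw [Finsupp.support_eq_empty.mp hsupp, N_zero hp hpq hγ0 hN]
      exact l1Aux_nonneg _
    -- nonempty support
    have hbs : b.support.Nonempty := Finset.nonempty_of_ne_empty hsupp
    have hub : ∀ x ∈ tiSet q γ N b, x ≤ max (γ * N b) (γ * l1Aux b) := by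
      rintro x ⟨m, hm, E, hE, rfl⟩
      have h1m : (1 : ℝ) ≤ (m : ℝ) ^ (1 / q) := one_le_rpow_nat hq hm
      by_cases hcov : ∃ j₀, b.support ⊆ E j₀
      · obtain ⟨j₀, hj₀⟩ := hcov
        rw [tiSum_collapse hN hp hpq hγ0 hE hj₀]
        refine le_trans (div_le_self ?_ h1m) (le_max_left _ _)
        exact mul_nonneg (le_of_lt hγ0) (N_nonneg hN b)
      · push_neg at hcov
        have hsum : ∑ j, N (restr (E j) b) ≤ l1Aux b := by
          refine le_trans (Finset.sum_le_sum fun j _ => ?_) (sum_l1Aux_restr_le hE b)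
          exact ih (restr (E j) b) (lt_of_lt_of_le (card_restr_lt (hcov j)) (by omega))
        refine le_trans (div_le_self ?_ h1m) ?_
        · exact mul_nonneg (le_of_lt hγ0)
            (Finset.sum_nonneg fun j _ => N_nonneg hN _)
        · exact le_max_of_le_right (mul_le_mul_of_nonneg_left hsum (le_of_lt hγ0))
    have hne : (tiSet q γ N b).Nonempty := by
      refine ⟨γ * (∑ j : Fin 1, N (restr b.support b)) / (1 : ℕ) ^ (1 / q),
        1, one_pos, fun _ => b.support, ⟨fun _ => hbs, ?_⟩, rfl⟩
      intro i j hij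
      exact absurd hij (by omega)
    have hS : sSup (tiSet q γ N b) ≤ max (γ * N b) (γ * l1Aux b) := csSup_le hne hub
    have hNb := hN b
    have hl1 := sup_le_l1Aux b
    have hl1' := l1Aux_nonneg b
    by_contra hc
    push_neg at hc
    have hNb' : N b ≤ max (l1Aux b) (max (γ * N b) (γ * l1Aux b)) :=
      calc N b = max (⨆ i, |b i|) (sSup (tiSet q γ N b)) := hN b
        _ ≤ _ := max_le_max hl1 hS
    have hNpos : 0 < N b := lt_of_le_of_lt hl1' hc
    rcases le_max_iff.mp hNb' with h1 | h1
    · linarith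
    · rcases le_max_iff.mp h1 with h2 | h2
      · nlinarith
      · nlinarith

end withPQ2
section withPQ3
variable {p q γ : ℝ} {N : (ℕ →₀ ℝ) → ℝ}

lemma tiSet_le_l1 (hN : TiEq q γ N) (hp : 1 < p) (hpq : 1 / p + 1 / q = 1)
    (hγ0 : 0 < γ) (hγ3 : γ < (3 : ℝ) ^ (-(1 / q))) (a : ℕ →₀ ℝ) :
    ∀ x ∈ tiSet q γ N a, x ≤ γ * l1Aux a := by
  have hq := (facts_q hp hpq).2
  rintro x ⟨m, hm, E, hE, rfl⟩
  have h1m : (1 : ℝ) ≤ (m : ℝ) ^ (1 / q) := one_le_rpow_nat hq hm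
  have hsum : ∑ j, N (restr (E j) a) ≤ l1Aux a :=
    le_trans (Finset.sum_le_sum fun j _ => N_le_l1Aux hN hp hpq hγ0 hγ3 _)
      (sum_l1Aux_restr_le hE a)
  refine le_trans (div_le_self ?_ h1m) (mul_le_mul_of_nonneg_left hsum (le_of_lt hγ0))
  exact mul_nonneg (le_of_lt hγ0) (Finset.sum_nonneg fun j _ => N_nonneg hN _)

lemma tiSet_bddAbove (hN : TiEq q γ N) (hp : 1 < p) (hpq : 1 / p + 1 / q = 1)
    (hγ0 : 0 < γ) (hγ3 : γ < (3 : ℝ) ^ (-(1 / q))) (a : ℕ →₀ ℝ) :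
    BddAbove (tiSet q γ N a) :=
  ⟨γ * l1Aux a, fun x hx => tiSet_le_l1 hN hp hpq hγ0 hγ3 a x hx⟩

lemma N_smul_le (hN : TiEq q γ N) (hp : 1 < p) (hpq : 1 / p + 1 / q = 1)
    (hγ0 : 0 < γ) (hγ3 : γ < (3 : ℝ) ^ (-(1 / q))) :
    ∀ (b : ℕ →₀ ℝ) (c : ℝ), 0 < c → N (c • b) ≤ c * N b := by
  have hq := (facts_q hp hpq).2
  have hγ1 := gamma_lt_one hp hpq hγ3
  suffices H : ∀ k, ∀ b : ℕ →₀ ℝ, b.support.card < k → ∀ c : ℝ, 0 < c → N (c • b) ≤ c * N b from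
    fun b c hc => H (b.support.card + 1) b (Nat.lt_succ_self _) c hc
  intro k
  induction k with
  | zero => intro b hb; omega
  | succ k ih =>
    intro b hb c hc
    by_cases hsupp : b.support = ∅
    · rw [Finsupp.support_eq_empty.mp hsupp, smul_zero, N_zero hp hpq hγ0 hN]
      simp
    have hbs : b.support.Nonempty := Finset.nonempty_of_ne_empty hsupp
    have hsuppc : (c • b).support = b.support := Finsupp.support_smul_eq (ne_of_gt hc)
    -- part 1 : sup norm
    have hpart1 : (⨆ i, |(c • b) i|) ≤ c * N b := by
      refine ciSup_le fun i => ?_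
      have : |(c • b) i| = c * |b i| := by
        rw [Finsupp.smul_apply, smul_eq_mul, abs_mul, abs_of_pos hc]
      rw [this]
      exact mul_le_mul_of_nonneg_left
        (le_trans (abs_le_sup b i) (sup_le_N hN b)) (le_of_lt hc)
    -- part 2 : the sSup
    have hpart2 : sSup (tiSet q γ N (c • b)) ≤ max (γ * N (c • b)) (c * N b) := by
      have hne : (tiSet q γ N (c • b)).Nonempty := by
        refine ⟨γ * (∑ j : Fin 1, N (restr (c • b).support (c • b))) / (1 : ℕ) ^ (1 / q),
          1, one_pos, fun _ => (c • b).support, ⟨fun _ => by rw [hsuppc]; exact hbs, ?_⟩, rfl⟩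
        intro i j hij
        exact absurd hij (by omega)
      refine csSup_le hne ?_
      rintro x ⟨m, hm, E, hE, rfl⟩
      have h1m : (1 : ℝ) ≤ (m : ℝ) ^ (1 / q) := one_le_rpow_nat hq hm
      by_cases hcov : ∃ j₀, (c • b).support ⊆ E j₀
      · obtain ⟨j₀, hj₀⟩ := hcov
        rw [tiSum_collapse hN hp hpq hγ0 hE hj₀]
        refine le_max_of_le_left (div_le_self ?_ h1m)
        exact mul_nonneg (le_of_lt hγ0) (N_nonneg hN _)
      · push_neg at hcov
        have hsum : ∑ j, N (restr (E j) (c • b)) ≤ c * ∑ j, N (restr (E j) b) := by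
          rw [Finset.mul_sum]
          refine Finset.sum_le_sum fun j _ => ?_
          rw [restr_smul]
          refine ih (restr (E j) b) ?_ c hc
          have : ¬ b.support ⊆ E j := by
            rw [← hsuppc]; exact hcov j
          exact lt_of_lt_of_le (card_restr_lt this) (by omega)
        refine le_max_of_le_right ?_
        have hy : γ * (∑ j, N (restr (E j) b)) / (m : ℝ) ^ (1 / q) ≤ N b :=
          le_trans (le_csSup (tiSet_bddAbove hN hp hpq hγ0 hγ3 b) ⟨m, hm, E, hE, rfl⟩)
            (sSup_tiSet_le_N hN b)
        have hrq : (0 : ℝ) < (m : ℝ) ^ (1 / q) :=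
          Real.rpow_pos_of_pos (by exact_mod_cast hm) _
        calc γ * (∑ j, N (restr (E j) (c • b))) / (m : ℝ) ^ (1 / q)
            ≤ γ * (c * ∑ j, N (restr (E j) b)) / (m : ℝ) ^ (1 / q) := by
              gcongr
          _ = c * (γ * (∑ j, N (restr (E j) b)) / (m : ℝ) ^ (1 / q)) := by ring
          _ ≤ c * N b := mul_le_mul_of_nonneg_left hy (le_of_lt hc)
    -- combine
    have hcomb : N (c • b) ≤ max (c * N b) (max (γ * N (c • b)) (c * N b)) :=
      calc N (c • b) = max (⨆ i, |(c • b) i|) (sSup (tiSet q γ N (c • b))) := hN (c • b)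
        _ ≤ _ := max_le_max hpart1 hpart2
    have hcN : 0 ≤ c * N b := mul_nonneg (le_of_lt hc) (N_nonneg hN b)
    by_contra hcon
    push_neg at hcon
    rcases le_max_iff.mp hcomb with h1 | h1
    · linarith
    · rcases le_max_iff.mp h1 with h2 | h2
      · nlinarith
      · linarith

end withPQ3

section final
variable {p q γ : ℝ} {N : (ℕ →₀ ℝ) → ℝ}

lemma dual_set_zero_mem (hN : TiEq q γ N) (hp : 1 < p) (hpq : 1 / p + 1 / q = 1)
    (hγ0 : 0 < γ) (c : ℕ →₀ ℝ) :
    (0 : ℝ) ∈ {x | ∃ a : ℕ →₀ ℝ, N a ≤ 1 ∧ x = ∑ i ∈ c.support, c i * a i} := by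
  refine ⟨0, by rw [N_zero hp hpq hγ0 hN]; norm_num, ?_⟩
  simp

lemma dualN_zero (hN : TiEq q γ N) (hp : 1 < p) (hpq : 1 / p + 1 / q = 1)
    (hγ0 : 0 < γ) : dualN N 0 = 0 := by
  unfold dualN
  have : {x | ∃ a : ℕ →₀ ℝ, N a ≤ 1 ∧ x = ∑ i ∈ (0 : ℕ →₀ ℝ).support, (0 : ℕ →₀ ℝ) i * a i}
      = {(0 : ℝ)} := by
    ext x
    simp only [Finsupp.support_zero, Finset.sum_empty, Set.mem_setOf_eq, Set.mem_singleton_iff]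
    constructor
    · rintro ⟨a, _, rfl⟩; rfl
    · rintro rfl; exact ⟨0, by rw [N_zero hp hpq hγ0 hN]; norm_num, rfl⟩
  rw [this, csSup_singleton]

lemma pairing_le (hN : TiEq q γ N) (hp : 1 < p) (hpq : 1 / p + 1 / q = 1)
    (hγ0 : 0 < γ) (hγ3 : γ < (3 : ℝ) ^ (-(1 / q)))
    (g b : ℕ →₀ ℝ) (hg : dualN N g = 1) :
    ∑ i ∈ g.support, g i * b i ≤ N b := by
  rcases eq_or_lt_of_le (N_nonneg hN b) with h | h
  · rw [eq_zero_of_N_eq_zero hN b h.symm]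
    simp only [Finsupp.coe_zero, Pi.zero_apply, mul_zero, Finset.sum_const_zero]
    exact N_nonneg hN 0
  · set t := N b with htdef
    have ht : t ≠ 0 := ne_of_gt h
    have hbdd : BddAbove {x | ∃ a : ℕ →₀ ℝ, N a ≤ 1 ∧ x = ∑ i ∈ g.support, g i * a i} := by
      by_contra hb
      rw [dualN, Real.sSup_of_not_bddAbove hb] at hg
      norm_num at hg
    have hNa' : N (t⁻¹ • b) ≤ 1 := by
      have := N_smul_le hN hp hpq hγ0 hγ3 b t⁻¹ (by positivity)
      rwa [inv_mul_cancel₀ ht] at this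
    have hmem : ∑ i ∈ g.support, g i * (t⁻¹ • b) i ∈
        {x | ∃ a : ℕ →₀ ℝ, N a ≤ 1 ∧ x = ∑ i ∈ g.support, g i * a i} :=
      ⟨t⁻¹ • b, hNa', rfl⟩
    have hle : ∑ i ∈ g.support, g i * (t⁻¹ • b) i ≤ 1 := by
      have := le_csSup hbdd hmem
      rwa [← dualN, hg] at this
    have heq : ∑ i ∈ g.support, g i * b i = t * ∑ i ∈ g.support, g i * (t⁻¹ • b) i := by
      rw [Finset.mul_sum]
      refine Finset.sum_congr rfl fun i _ => ?_
      rw [Finsupp.smul_apply, smul_eq_mul]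
      field_simp
    rw [heq]
    calc t * ∑ i ∈ g.support, g i * (t⁻¹ • b) i ≤ t * 1 :=
          mul_le_mul_of_nonneg_left hle (le_of_lt h)
      _ = t := mul_one t

/-- in `Ti^*(p,γ)`, any `n` normalized block functionals of `(eⱼ^*)`
(given by their coefficient vectors, with consecutive supports) satisfy
`‖∑ⱼ xⱼ^*‖ ≤ n^{1/q}/γ`. -/
theorem stmt8 (p q γ : ℝ) (hp : 1 < p) (hpq : 1 / p + 1 / q = 1)
    (hγ0 : 0 < γ) (hγ3 : γ < (3 : ℝ) ^ (-(1 / q)))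
    (N : (ℕ →₀ ℝ) → ℝ) (hN : TiEq q γ N)
    (n : ℕ) (f : Fin n → (ℕ →₀ ℝ))
    (hfn : ∀ j, dualN N (f j) = 1) (hfc : ConsecSupp f) :
    dualN N (∑ j, f j) ≤ (n : ℝ) ^ (1 / q) / γ := by
  have hq := (facts_q hp hpq).2
  set c : ℕ →₀ ℝ := ∑ j, f j with hc
  apply csSup_le ⟨0, dual_set_zero_mem hN hp hpq hγ0 c⟩
  rintro x ⟨a, ha, rfl⟩
  -- rewrite the pairing as a sum over blocks
  set T : Finset ℕ := Finset.univ.biUnion fun j => (f j).support with hT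
  have hsubT : c.support ⊆ T := by
    intro i hi
    have := Finsupp.support_finset_sum (s := (Finset.univ : Finset (Fin n))) (f := f) hi
    exact this
  have step1 : ∑ i ∈ c.support, c i * a i = ∑ j, ∑ i ∈ (f j).support, f j i * a i := by
    rw [Finset.sum_subset hsubT (fun i _ hi => by
      rw [Finsupp.notMem_support_iff.mp hi, zero_mul])]
    have hci : ∀ i, c i = ∑ j, f j i := by
      intro i; rw [hc]; rw [Finsupp.finset_sum_apply]
    calc ∑ i ∈ T, c i * a i = ∑ i ∈ T, ∑ j, f j i * a i := by
          refine Finset.sum_congr rfl fun i _ => ?_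
          rw [hci i, Finset.sum_mul]
      _ = ∑ j, ∑ i ∈ T, f j i * a i := Finset.sum_comm
      _ = ∑ j, ∑ i ∈ (f j).support, f j i * a i := by
          refine Finset.sum_congr rfl fun j _ => ?_
          exact (Finset.sum_subset (Finset.subset_biUnion_of_mem _ (Finset.mem_univ j))
            (fun i _ hi => by rw [Finsupp.notMem_support_iff.mp hi, zero_mul])).symm
  rw [step1]
  -- each block pairing is bounded by N of the restricted vector
  have step2 : ∀ j, ∑ i ∈ (f j).support, f j i * a i ≤ N (restr (f j).support a) := by
    intro j
    have : ∑ i ∈ (f j).support, f j i * a i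
        = ∑ i ∈ (f j).support, f j i * (restr (f j).support a) i := by
      refine Finset.sum_congr rfl fun i hi => ?_
      rw [restr_apply, if_pos hi]
    rw [this]
    exact pairing_le hN hp hpq hγ0 hγ3 (f j) _ (hfn j)
  rcases Nat.eq_zero_or_pos n with hn | hn
  · subst hn
    simp only [Finset.univ_eq_empty, Finset.sum_empty]
    rw [Nat.cast_zero, Real.zero_rpow (by positivity), zero_div]
  · -- supports are nonempty
    have hfne : ∀ j, ((f j).support).Nonempty := by
      intro j
      rcases Finset.eq_empty_or_nonempty (f j).support with h | h
      · exfalso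
        have hz : f j = 0 := Finsupp.support_eq_empty.mp h
        have h1 := hfn j
        rw [hz, dualN_zero hN hp hpq hγ0] at h1
        norm_num at h1
      · exact h
    have hE : Consec (fun j => (f j).support) := ⟨hfne, hfc⟩
    have hx0 : γ * (∑ j, N (restr ((f j).support) a)) / (n : ℝ) ^ (1 / q) ∈ tiSet q γ N a :=
      ⟨n, hn, fun j => (f j).support, hE, rfl⟩
    have hx0le : γ * (∑ j, N (restr ((f j).support) a)) / (n : ℝ) ^ (1 / q) ≤ 1 :=
      le_trans (le_trans (le_csSup (tiSet_bddAbove hN hp hpq hγ0 hγ3 a) hx0)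
        (sSup_tiSet_le_N hN a)) ha
    have hrq : (0 : ℝ) < (n : ℝ) ^ (1 / q) := Real.rpow_pos_of_pos (by exact_mod_cast hn) _
    have hsumN : ∑ j, N (restr ((f j).support) a) ≤ (n : ℝ) ^ (1 / q) / γ := by
      rw [div_le_one hrq] at hx0le
      rw [le_div_iff₀ hγ0]
      linarith
    exact le_trans (Finset.sum_le_sum fun j _ => step2 j) hsumN

end final
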